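/- Solutions are bounded: let E be a real inner product space, v : E → ℝ differentiable and coercive (v(x) → ∞ as ‖x‖ → ∞), and f : E → E with ⟪∇v(y), f(y)⟫ ≤ 0 for all y ∈ E. Then for every differentiable curve x : ℝ → E with x'(t) = f(x(t)) for all t ≥ 0, the forward orbit {x(t) : t ≥ 0} is a bounded subset of E. -/

import Mathlib

open Filter

/-- Solutions are bounded: if `v` is differentiable and coercive and
`⟪∇v(y), f(y)⟫ ≤ 0` for all `y`, then for every solution `x` of `ẋ = f(x)`
the forward orbit `{x(t) : t ≥ 0}` is bounded. The gradient `∇v` is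
represented by `g : E → E` via `HasFDerivAt v (innerSL ℝ (g y)) y`. -/
theorem solution_forward_orbit_bounded
    {E : Type*} [NormedAddCommGroup E] [InnerProductSpace ℝ E]
    (v : E → ℝ) (g : E → E)
    (hv : ∀ y : E, HasFDerivAt v (innerSL ℝ (g y)) y)
    (hcoercive : Tendsto v (Filter.comap (fun x : E => ‖x‖) atTop) atTop)
    (f : E → E)
    (hdec : ∀ y : E, (inner ℝ (g y) (f y) : ℝ) ≤ 0)
    (x : ℝ → E) (hx : ∀ t : ℝ, 0 ≤ t → HasDerivAt x (f (x t)) t) :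
    Bornology.IsBounded (x '' Set.Ici (0 : ℝ)) := by
  set h : ℝ → ℝ := fun t => v (x t) with hh_def
  have hh : ∀ t : ℝ, 0 ≤ t → HasDerivAt h ((inner ℝ (g (x t)) (f (x t)) : ℝ)) t := by
    intro t ht
    have := (hv (x t)).comp_hasDerivAt t (hx t ht)
    simp at this
    exact this
  have hanti : AntitoneOn h (Set.Ici (0 : ℝ)) := by
    apply antitoneOn_of_deriv_nonpos (convex_Ici 0)
    · intro t ht
      exact (hh t ht).continuousAt.continuousWithinAt
    · intro t ht
      rw [interior_Ici] at ht
      exact (hh t (le_of_lt ht)).differentiableAt.differentiableWithinAt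
    · intro t ht
      rw [interior_Ici] at ht
      rw [(hh t (le_of_lt ht)).deriv]
      exact hdec (x t)
  have hle : ∀ t : ℝ, 0 ≤ t → v (x t) ≤ v (x 0) :=
    fun t ht => hanti (Set.self_mem_Ici) ht ht
  -- coercivity gives a radius R
  have hev : ∀ᶠ y in Filter.comap (fun x : E => ‖x‖) atTop, v (x 0) + 1 ≤ v y :=
    hcoercive.eventually (eventually_ge_atTop _)
  rw [eventually_comap] at hev
  rcases (eventually_atTop).1 hev with ⟨R, hR⟩
  apply Bornology.IsBounded.subset (Metric.isBounded_closedBall (x := (0 : E)) (r := R))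
  rintro _ ⟨t, ht, rfl⟩
  rw [Metric.mem_closedBall, dist_zero_right]
  by_contra hcon
  push_neg at hcon
  have : v (x 0) + 1 ≤ v (x t) := hR ‖x t‖ hcon.le (x t) rfl
  linarith [hle t ht]
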